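/- For points X_1, …, X_n ∈ ℝ^d and x ∈ ℝ^d, with PP_n(x|σ) the perplexity defined by the Gaussian conditional distribution with bandwidth σ, the identity PP_n(x|σ)/(n σ^d) = (2π)^{d/2} · A(σ) · exp( (d/2) · B(σ)/A(σ) ) holds, where A(σ) := (n σ^d)^{−1} Σ_i K₁((x − X_i)/σ) and B(σ) := (n σ^d)^{−1} Σ_i K₂((x − X_i)/σ), with K₁(s) = (2π)^{−d/2} e^{−|s|²/2} and K₂(s) = (d(2π)^{d/2})^{−1} |s|² e^{−|s|²/2}. -/

import Mathlib

open scoped BigOperators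

/-- The conditional tSNE neighbor probability `p_k` at bandwidth `σ`. -/
noncomputable def tsneP {d n : ℕ} (X : Fin n → EuclideanSpace ℝ (Fin d))
    (x : EuclideanSpace ℝ (Fin d)) (σ : ℝ) (j : Fin n) : ℝ :=
  Real.exp (-(‖x - X j‖ ^ 2 / (2 * σ ^ 2))) /
    ∑ k, Real.exp (-(‖x - X k‖ ^ 2 / (2 * σ ^ 2)))

/-- Perplexity `PP_n(x|σ) = exp(-Σ_k p_k log p_k)`. -/
noncomputable def perplexity {d n : ℕ} (X : Fin n → EuclideanSpace ℝ (Fin d))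
    (x : EuclideanSpace ℝ (Fin d)) (σ : ℝ) : ℝ :=
  Real.exp (-∑ j, tsneP X x σ j * Real.log (tsneP X x σ j))

/-- `K₁(s) = (2π)^{-d/2} e^{-|s|²/2}`. -/
noncomputable def K₁ {d : ℕ} (s : EuclideanSpace ℝ (Fin d)) : ℝ :=
  (2 * Real.pi) ^ (-(d : ℝ) / 2) * Real.exp (-‖s‖ ^ 2 / 2)

/-- `K₂(s) = (d(2π)^{d/2})⁻¹ |s|² e^{-|s|²/2}`. -/
noncomputable def K₂ {d : ℕ} (s : EuclideanSpace ℝ (Fin d)) : ℝ :=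
  ((d : ℝ) * (2 * Real.pi) ^ ((d : ℝ) / 2))⁻¹ * ‖s‖ ^ 2 * Real.exp (-‖s‖ ^ 2 / 2)

/-- `PP_n(x|σ)/(nσ^d) = (2π)^{d/2} · A(σ) · exp((d/2)·B(σ)/A(σ))` where
`A(σ) = (nσ^d)⁻¹ Σ_i K₁((x - X_i)/σ)` and `B(σ) = (nσ^d)⁻¹ Σ_i K₂((x - X_i)/σ)`. -/
theorem stmt_8 {d n : ℕ} (hd : 0 < d) (hn : 0 < n)
    (X : Fin n → EuclideanSpace ℝ (Fin d)) (x : EuclideanSpace ℝ (Fin d))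
    (σ : ℝ) (hσ : 0 < σ) :
    perplexity X x σ / ((n : ℝ) * σ ^ d) =
      (2 * Real.pi) ^ ((d : ℝ) / 2) *
          (((n : ℝ) * σ ^ d)⁻¹ * ∑ i, K₁ (σ⁻¹ • (x - X i))) *
        Real.exp (((d : ℝ) / 2) *
          ((((n : ℝ) * σ ^ d)⁻¹ * ∑ i, K₂ (σ⁻¹ • (x - X i))) /
            (((n : ℝ) * σ ^ d)⁻¹ * ∑ i, K₁ (σ⁻¹ • (x - X i))))) := by
  have hσ2 : (0:ℝ) < σ ^ 2 := by positivity
  have hNe : (Finset.univ : Finset (Fin n)).Nonempty := by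
    simpa [Finset.univ_nonempty_iff] using Fin.pos_iff_nonempty.mp hn
  set E : Fin n → ℝ := fun i => Real.exp (-(‖x - X i‖ ^ 2 / (2 * σ ^ 2))) with hE
  set S := ∑ i, E i with hSdef
  have hS : 0 < S := Finset.sum_pos (fun i _ => Real.exp_pos _) hNe
  set T := ∑ i, ‖x - X i‖ ^ 2 * E i with hTdef
  set c : ℝ := (2 * Real.pi) ^ ((d : ℝ) / 2) with hcdef
  have hc : 0 < c := Real.rpow_pos_of_pos (by positivity) _
  have hcinv : (2 * Real.pi) ^ (-(d : ℝ) / 2) = c⁻¹ := by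
    rw [hcdef, ← Real.rpow_neg (by positivity), neg_div]
  -- perplexity computation
  have hlog : ∀ j, Real.log (tsneP X x σ j)
      = -(‖x - X j‖ ^ 2 / (2 * σ ^ 2)) - Real.log S := by
    intro j
    unfold tsneP
    rw [Real.log_div (Real.exp_ne_zero _) hS.ne', Real.log_exp]
  have hsum : ∑ j, tsneP X x σ j * Real.log (tsneP X x σ j)
      = -(T / (2 * σ ^ 2 * S)) - Real.log S := by
    have h1 : ∀ j, tsneP X x σ j = E j / S := fun j => rfl
    have h2 : ∑ j, tsneP X x σ j * Real.log (tsneP X x σ j)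
        = ∑ j, (-(‖x - X j‖ ^ 2 * E j) / (2 * σ ^ 2 * S)
            - (E j / S) * Real.log S) := by
      refine Finset.sum_congr rfl fun j _ => ?_
      rw [hlog j, h1 j]
      field_simp
    rw [h2, Finset.sum_sub_distrib]
    congr 1
    · rw [← Finset.sum_div, Finset.sum_neg_distrib, ← hTdef, neg_div]
    · rw [← Finset.sum_mul, ← Finset.sum_div, ← hSdef, div_self hS.ne', one_mul]
  have hperp : perplexity X x σ = S * Real.exp (T / (2 * σ ^ 2 * S)) := by
    unfold perplexity
    rw [hsum]
    rw [neg_sub, sub_neg_eq_add, Real.exp_add, Real.exp_log hS]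
  -- kernel sums
  have hnorm : ∀ i : Fin n, ‖σ⁻¹ • (x - X i)‖ ^ 2 = ‖x - X i‖ ^ 2 / σ ^ 2 := by
    intro i
    rw [norm_smul, mul_pow, norm_inv, Real.norm_eq_abs, abs_of_pos hσ]
    field_simp
  have hK1 : ∑ i, K₁ (σ⁻¹ • (x - X i)) = c⁻¹ * S := by
    rw [hSdef, Finset.mul_sum]
    refine Finset.sum_congr rfl fun i _ => ?_
    unfold K₁
    rw [hnorm i, hcinv]
    congr 1
    rw [hE]
    congr 1
    ring
  have hK2 : ∑ i, K₂ (σ⁻¹ • (x - X i)) = ((d : ℝ) * c)⁻¹ * (σ ^ 2)⁻¹ * T := by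
    rw [hTdef, Finset.mul_sum]
    refine Finset.sum_congr rfl fun i _ => ?_
    unfold K₂
    rw [hnorm i, ← hcdef]
    have : Real.exp (-(‖x - X i‖ ^ 2 / σ ^ 2) / 2) = E i := by
      rw [hE]
      congr 1
      ring
    rw [this]
    ring
  have hdne : ((d : ℝ)) ≠ 0 := Nat.cast_ne_zero.mpr hd.ne'
  have hnne : ((n : ℝ)) ≠ 0 := Nat.cast_ne_zero.mpr hn.ne'
  have hσd : (σ : ℝ) ^ d ≠ 0 := pow_ne_zero _ hσ.ne'
  rw [hperp, hK1, hK2]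
  have harg : ((d : ℝ) / 2) *
      ((((n : ℝ) * σ ^ d)⁻¹ * (((d : ℝ) * c)⁻¹ * (σ ^ 2)⁻¹ * T)) /
        (((n : ℝ) * σ ^ d)⁻¹ * (c⁻¹ * S))) = T / (2 * σ ^ 2 * S) := by
    field_simp
  rw [harg]
  field_simp
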